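/- Let E be a Banach lattice whose order is induced by a normalized 1-unconditional basis (e_k), with biorthogonal functionals (e_k*). For k ∈ ℕ define f_k : E* → ℝ by f_k(x*) = ( |x*(e_k)| − 2^{2k}( Σ_{i<k} |x*(e_i)| + Σ_{i>k} 2^{−i} |x*(e_i)| ) )₊. Then the functions f_k are pairwise disjoint: for all i ≠ j and all x* ∈ E*, f_i(x*) · f_j(x*) = 0. -/

import Mathlib

/-- The function `f_k(x*) = (|x*(e_k)| - 2^{2k}(∑_{i<k} |x*(e_i)| + ∑_{i>k} 2^{-i} |x*(e_i)|))₊`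
on the dual of a Banach space with a distinguished sequence `(e_k)`. -/
noncomputable def fk (E : Type*) [NormedAddCommGroup E] [NormedSpace ℝ E]
    (e : ℕ → E) (k : ℕ) (x : StrongDual ℝ E) : ℝ :=
  max (|x (e k)| - 2 ^ (2 * k) *
    ((∑ i ∈ Finset.range k, |x (e i)|) +
      ∑' i : ℕ, if k < i then ((1 : ℝ) / 2) ^ i * |x (e i)| else 0)) 0

lemma fk_key (E : Type*) [NormedAddCommGroup E] [NormedSpace ℝ E]
    (e : ℕ → E) (hnorm : ∀ k, ‖e k‖ = 1)
    (i j : ℕ) (hij : i < j) (x : StrongDual ℝ E) :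
    fk E e i x * fk E e j x = 0 := by
  by_contra h
  have h0 : ∀ k, 0 ≤ fk E e k x := fun k => le_max_right _ _
  have hi : 0 < fk E e i x := lt_of_le_of_ne (h0 i) (by
    intro hc; exact h (by rw [← hc]; ring))
  have hj : 0 < fk E e j x := lt_of_le_of_ne (h0 j) (by
    intro hc; exact h (by rw [← hc]; ring))
  have hsum : ∀ k, Summable (fun n => if k < n then ((1 : ℝ) / 2) ^ n * |x (e n)| else 0) := by
    intro k
    refine Summable.of_nonneg_of_le (fun n => ?_) (fun n => ?_)
      ((summable_geometric_of_lt_one (r := (1:ℝ)/2) (by norm_num) (by norm_num)).mul_right ‖x‖)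
    · split <;> positivity
    · split
      · apply mul_le_mul_of_nonneg_left _ (by positivity)
        calc |x (e n)| ≤ ‖x‖ * ‖e n‖ := x.le_opNorm (e n)
          _ = ‖x‖ := by rw [hnorm n, mul_one]
      · positivity
  -- positivity of the inner expressions
  have hiA : 0 < |x (e i)| - 2 ^ (2 * i) *
      ((∑ l ∈ Finset.range i, |x (e l)|) +
        ∑' n : ℕ, if i < n then ((1 : ℝ) / 2) ^ n * |x (e n)| else 0) := by
    by_contra hc
    push_neg at hc
    have : fk E e i x = 0 := max_eq_right hc
    rw [this] at hi; exact lt_irrefl _ hi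
  have hjA : 0 < |x (e j)| - 2 ^ (2 * j) *
      ((∑ l ∈ Finset.range j, |x (e l)|) +
        ∑' n : ℕ, if j < n then ((1 : ℝ) / 2) ^ n * |x (e n)| else 0) := by
    by_contra hc
    push_neg at hc
    have : fk E e j x = 0 := max_eq_right hc
    rw [this] at hj; exact lt_irrefl _ hj
  -- tail bound for i
  have htail : ((1 : ℝ) / 2) ^ j * |x (e j)| ≤
      ∑' n : ℕ, if i < n then ((1 : ℝ) / 2) ^ n * |x (e n)| else 0 := by
    have := Summable.le_tsum (hsum i) j (fun b _ => by split <;> positivity)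
    simpa [if_pos hij] using this
  have hS1 : (0 : ℝ) ≤ ∑ l ∈ Finset.range i, |x (e l)| :=
    Finset.sum_nonneg fun l _ => abs_nonneg _
  have hS2 : |x (e i)| ≤ ∑ l ∈ Finset.range j, |x (e l)| :=
    Finset.single_le_sum (f := fun l => |x (e l)|) (fun l _ => abs_nonneg _)
      (Finset.mem_range.mpr hij)
  have hT2 : (0 : ℝ) ≤ ∑' n : ℕ, if j < n then ((1 : ℝ) / 2) ^ n * |x (e n)| else 0 :=
    tsum_nonneg fun n => by split <;> positivity
  -- |x(e i)| > 2^(2i) * (1/2)^j * |x(e j)|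
  have key1 : 2 ^ (2 * i) * (((1 : ℝ) / 2) ^ j * |x (e j)|) < |x (e i)| := by
    have : 2 ^ (2 * i) * (((1 : ℝ) / 2) ^ j * |x (e j)|) ≤ 2 ^ (2 * i) *
        ((∑ l ∈ Finset.range i, |x (e l)|) +
          ∑' n : ℕ, if i < n then ((1 : ℝ) / 2) ^ n * |x (e n)| else 0) := by
      apply mul_le_mul_of_nonneg_left _ (by positivity)
      linarith
    linarith
  -- |x(e j)| > 2^(2j) * |x(e i)|
  have key2 : 2 ^ (2 * j) * |x (e i)| < |x (e j)| := by
    have : 2 ^ (2 * j) * |x (e i)| ≤ 2 ^ (2 * j) *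
        ((∑ l ∈ Finset.range j, |x (e l)|) +
          ∑' n : ℕ, if j < n then ((1 : ℝ) / 2) ^ n * |x (e n)| else 0) := by
      apply mul_le_mul_of_nonneg_left _ (by positivity)
      linarith
    linarith
  have hpos : 0 < |x (e i)| := by
    have : (0:ℝ) ≤ 2 ^ (2 * i) * (((1 : ℝ) / 2) ^ j * |x (e j)|) := by positivity
    linarith
  -- combine: |x(e i)| > 2^(2i) * (1/2)^j * 2^(2j) * |x(e i)| = 2^(2i+j) |x(e i)|
  have hcomb : 2 ^ (2 * i) * (((1 : ℝ) / 2) ^ j * (2 ^ (2 * j) * |x (e i)|)) < |x (e i)| := by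
    calc 2 ^ (2 * i) * (((1 : ℝ) / 2) ^ j * (2 ^ (2 * j) * |x (e i)|))
        ≤ 2 ^ (2 * i) * (((1 : ℝ) / 2) ^ j * |x (e j)|) := by
          apply mul_le_mul_of_nonneg_left _ (by positivity)
          exact mul_le_mul_of_nonneg_left key2.le (by positivity)
      _ < |x (e i)| := key1
  have heq : (2 : ℝ) ^ (2 * i) * (((1 : ℝ) / 2) ^ j * (2 ^ (2 * j) * |x (e i)|)) =
      2 ^ (2 * i + j) * |x (e i)| := by
    rw [div_pow, one_pow, pow_add, two_mul j, pow_add]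
    field_simp
  rw [heq] at hcomb
  have hge : (2 : ℝ) ≤ 2 ^ (2 * i + j) := by
    calc (2:ℝ) = 2 ^ 1 := (pow_one 2).symm
      _ ≤ 2 ^ (2 * i + j) := by
        apply pow_le_pow_right₀ (by norm_num)
        omega
  nlinarith

/-- Let `E` be a Banach lattice whose order is induced by a normalized `1`-unconditional
basis `(e_k)` with biorthogonal functionals. Then the functions `f_k` above are pairwise
disjoint: `f_i(x*) · f_j(x*) = 0` for all `i ≠ j` and all `x* ∈ E*`. -/
theorem stmt18 (E : Type*) [NormedAddCommGroup E] [NormedSpace ℝ E] [CompleteSpace E]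
    [Lattice E] (e : ℕ → E)
    (hnorm : ∀ k, ‖e k‖ = 1)
    (huncond : ∀ (s : Finset ℕ) (a ε : ℕ → ℝ), (∀ k, ε k = 1 ∨ ε k = -1) →
      ‖∑ k ∈ s, (ε k * a k) • e k‖ = ‖∑ k ∈ s, a k • e k‖)
    (hbiorth : ∃ e' : ℕ → StrongDual ℝ E,
      ∀ k l, e' k (e l) = if k = l then (1 : ℝ) else 0) :
    ∀ i j, i ≠ j → ∀ x : StrongDual ℝ E, fk E e i x * fk E e j x = 0 := by
  intro i j hij x
  rcases lt_or_gt_of_ne hij with h | h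
  · exact fk_key E e hnorm i j h x
  · rw [mul_comm]; exact fk_key E e hnorm j i h x
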